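/- Let H be the Coxeter arrangement of type A₁ⁿ in ℝⁿ, given by the coordinate hyperplanes {x_i = 0} for 1 ≤ i ≤ n, with base chamber the positive orthant. Let K be a measurable set of finite volume that is stable under all coordinate sign changes (i.e., under the group {±1}ⁿ acting by coordinatewise sign flips), and let a = (a₁,…,a_n) ∈ ℝⁿ be such that K contains the box [−|a₁|,|a₁|] × ⋯ × [−|a_n|,|a_n|]. Then P(H, K + a) = 2ⁿ · a₁ a₂ ⋯ a_n. -/

import Mathlib

open MeasureTheory

noncomputable section
attribute [local instance] Classical.propDecidable

/-- The open orthant of `ℝⁿ` determined by a sign vector `ε`; these are the chambers of the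
coordinate arrangement `A₁ⁿ`, the base chamber being the positive orthant (`ε ≡ true`). -/
def orthant {n : ℕ} (ε : Fin n → Bool) : Set (EuclideanSpace ℝ (Fin n)) :=
  {x | ∀ i, if ε i then 0 < x i else x i < 0}

/-! ### Auxiliary lemmas -/

lemma sign_key (s t : ℝ) (h1 : t ≠ s) (h2 : t ≠ -s) :
    Real.sign (t + s) + Real.sign (-t + s)
      = 2 * Real.sign s * (if |t| ≤ |s| then 1 else 0) := by
  rcases lt_trichotomy |t| |s| with hlt | heq | hgt
  · rw [if_pos hlt.le]
    have ha : -|s| < t := lt_of_lt_of_le (neg_lt_neg hlt) (neg_abs_le t)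
    have hb : t < |s| := lt_of_le_of_lt (le_abs_self t) hlt
    rcases abs_cases s with ⟨hs1, hs2⟩ | ⟨hs1, hs2⟩
    · have hs : 0 < s := by nlinarith [abs_nonneg t]
      rw [Real.sign_of_pos (by linarith : (0:ℝ) < t + s),
        Real.sign_of_pos (by linarith : (0:ℝ) < -t + s), Real.sign_of_pos hs]; ring
    · rw [Real.sign_of_neg (by linarith : t + s < 0),
        Real.sign_of_neg (by linarith : -t + s < 0), Real.sign_of_neg hs2]; ring
  · exact absurd (abs_eq_abs.mp heq) (by rintro (h | h); exacts [h1 h, h2 h])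
  · rw [if_neg (not_le.mpr hgt)]
    have ha : -|t| < s := lt_of_lt_of_le (neg_lt_neg hgt) (neg_abs_le s)
    have hb : s < |t| := lt_of_le_of_lt (le_abs_self s) hgt
    rcases abs_cases t with ⟨ht1, ht2⟩ | ⟨ht1, ht2⟩
    · rw [Real.sign_of_pos (by linarith : (0:ℝ) < t + s),
        Real.sign_of_neg (by linarith : -t + s < 0)]; ring
    · rw [Real.sign_of_neg (by linarith : t + s < 0),
        Real.sign_of_pos (by linarith : (0:ℝ) < -t + s)]; ring

lemma ind_sign (t : ℝ) :
    (if true then (1:ℝ) else -1) * (if (if true then 0 < t else t < 0) then 1 else 0)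
      + (if false then (1:ℝ) else -1) * (if (if false then 0 < t else t < 0) then 1 else 0)
      = Real.sign t := by
  norm_num
  rcases lt_trichotomy t 0 with h | h | h
  · rw [if_neg (by linarith), if_pos h, Real.sign_of_neg h]; ring
  · subst h; simp [Real.sign_zero]
  · rw [if_pos h, if_neg (by linarith), Real.sign_of_pos h]; ring

lemma measurable_realSign : Measurable Real.sign := by
  unfold Real.sign
  exact Measurable.ite (measurableSet_lt measurable_id measurable_const)
    measurable_const (Measurable.ite (measurableSet_lt measurable_const measurable_id)
      measurable_const measurable_const)

lemma abs_sign_le_one (t : ℝ) : |Real.sign t| ≤ 1 := by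
  rcases Real.sign_apply_eq t with h | h | h <;> rw [h] <;> norm_num

lemma coord_null {n : ℕ} (i : Fin n) (c : ℝ) :
    volume {y : EuclideanSpace ℝ (Fin n) | y i = c} = 0 := by
  have hmeas : MeasurableSet {y : Fin n → ℝ | y i = c} :=
    measurableSet_eq_fun (measurable_pi_apply i) measurable_const
  have hpi : volume {y : Fin n → ℝ | y i = c} = 0 := by
    have : {y : Fin n → ℝ | y i = c}
        = Set.pi Set.univ (fun j => if j = i then {c} else Set.univ) := by
      ext y
      simp only [Set.mem_setOf_eq, Set.mem_pi, Set.mem_univ, forall_true_left]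
      constructor
      · intro h j; by_cases hj : j = i <;> simp [hj, h]
      · intro h; have := h i; simpa using this
    rw [this, volume_pi_pi]
    exact Finset.prod_eq_zero (Finset.mem_univ i) (by simp)
  have := (PiLp.volume_preserving_ofLp (Fin n)).measure_preimage
    hmeas.nullMeasurableSet
  rw [hpi] at this
  exact this

lemma box_vol {n : ℕ} (a : EuclideanSpace ℝ (Fin n)) :
    (volume {x : EuclideanSpace ℝ (Fin n) | ∀ i, |x i| ≤ |a i|}).toReal
      = ∏ i, (2 * |a i|) := by
  have hset : {x : Fin n → ℝ | ∀ i, |x i| ≤ |a i|}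
      = Set.pi Set.univ (fun i => Set.Icc (-|a i|) (|a i|)) := by
    ext x
    simp only [Set.mem_setOf_eq, Set.mem_univ_pi, Set.mem_Icc, abs_le]
  have hmeas : MeasurableSet {x : Fin n → ℝ | ∀ i, |x i| ≤ |a i|} := by
    rw [hset]; exact MeasurableSet.univ_pi fun i => measurableSet_Icc
  have hpi : volume {x : Fin n → ℝ | ∀ i, |x i| ≤ |a i|}
      = ∏ i, ENNReal.ofReal (2 * |a i|) := by
    rw [hset, volume_pi_pi]
    refine Finset.prod_congr rfl fun i _ => ?_
    rw [Real.volume_Icc]; ring_nf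
  have htr := (PiLp.volume_preserving_ofLp (Fin n)).measure_preimage
    hmeas.nullMeasurableSet
  rw [hpi] at htr
  rw [show volume {x : EuclideanSpace ℝ (Fin n) | ∀ i, |x i| ≤ |a i|}
      = ∏ i, ENNReal.ofReal (2 * |a i|) from htr, ENNReal.toReal_prod]
  exact Finset.prod_congr rfl fun i _ => ENNReal.toReal_ofReal (by positivity)

lemma box_meas {n : ℕ} (a : EuclideanSpace ℝ (Fin n)) :
    MeasurableSet {x : EuclideanSpace ℝ (Fin n) | ∀ i, |x i| ≤ |a i|} := by
  have : {x : EuclideanSpace ℝ (Fin n) | ∀ i, |x i| ≤ |a i|}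
      = ⋂ i, {x : EuclideanSpace ℝ (Fin n) | |x i| ≤ |a i|} := by
    ext x; simp [Set.mem_iInter]
  rw [this]
  exact MeasurableSet.iInter fun i =>
    measurableSet_le (((continuous_apply i).comp (PiLp.continuous_ofLp 2 _)).measurable.abs) measurable_const

/-- The coordinate sign flip determined by `ε`. -/
def flipMap {n : ℕ} (ε : Fin n → Bool) (x : EuclideanSpace ℝ (Fin n)) :
    EuclideanSpace ℝ (Fin n) :=
  WithLp.toLp 2 (fun i => if ε i then -x i else x i)

lemma flip_mp {n : ℕ} (ε : Fin n → Bool) :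
    MeasurePreserving (flipMap ε)
      (volume : Measure (EuclideanSpace ℝ (Fin n)))
      (volume : Measure (EuclideanSpace ℝ (Fin n))) := by
  have hpi : MeasurePreserving (fun x : Fin n → ℝ => fun i => if ε i then -x i else x i)
      volume volume := by
    have := MeasureTheory.volume_preserving_pi
      (f := fun (i : Fin n) (t : ℝ) => if ε i then -t else t) (fun i => ?_)
    · exact this
    · by_cases h : ε i
      · simpa [h] using Measure.measurePreserving_neg (volume : Measure ℝ)
      · simp only [h, if_false]; exact MeasurePreserving.id (volume : Measure ℝ)
  have e1 : MeasurePreserving (MeasurableEquiv.toLp 2 (Fin n → ℝ)).symm volume volume :=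
    EuclideanSpace.volume_preserving_symm_measurableEquiv_toLp (Fin n)
  have e2 : MeasurePreserving (MeasurableEquiv.toLp 2 (Fin n → ℝ)).symm.symm volume volume :=
    e1.symm _
  exact (e2.comp hpi).comp e1

lemma flip_invol {n : ℕ} (ε : Fin n → Bool) : Function.Involutive (flipMap ε) := by
  intro x
  ext i
  simp only [flipMap]
  by_cases h : ε i <;> simp [h]

def flipEquiv {n : ℕ} (ε : Fin n → Bool) :
    EuclideanSpace ℝ (Fin n) ≃ᵐ EuclideanSpace ℝ (Fin n) where
  toFun := flipMap ε
  invFun := flipMap ε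
  left_inv := flip_invol ε
  right_inv := flip_invol ε
  measurable_toFun := (flip_mp ε).measurable
  measurable_invFun := (flip_mp ε).measurable

/-- Factorization of a sum over sign vectors into a product. -/
lemma sum_prod_bool {n : ℕ} (ψ : Fin n → Bool → ℝ) :
    ∑ ε : Fin n → Bool, ∏ i, ψ i (ε i) = ∏ i, (ψ i true + ψ i false) := by
  classical
  have h := Finset.prod_univ_sum (fun _ : Fin n => (Finset.univ : Finset Bool)) ψ
  rw [Fintype.piFinset_univ] at h
  rw [← h]
  exact Finset.prod_congr rfl fun i _ => Fintype.sum_bool _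

lemma sign_prod {n : ℕ} (ε : Fin n → Bool) :
    ((-1 : ℝ) ^ (Finset.univ.filter (fun i => ε i = false)).card)
      = ∏ i, (if ε i then (1:ℝ) else -1) := by
  rw [← Finset.prod_const, Finset.prod_filter]
  exact Finset.prod_congr rfl fun i _ => by by_cases h : ε i <;> simp [h]

/-- The cone of points `y` with `y + a` in the orthant of `ε`. -/
def cone {n : ℕ} (a : EuclideanSpace ℝ (Fin n)) (ε : Fin n → Bool) :
    Set (EuclideanSpace ℝ (Fin n)) :=
  {y | ∀ i, if ε i then 0 < y i + a i else y i + a i < 0}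

lemma cone_meas {n : ℕ} (a : EuclideanSpace ℝ (Fin n)) (ε : Fin n → Bool) :
    MeasurableSet (cone a ε) := by
  have : cone a ε
      = ⋂ i, {y : EuclideanSpace ℝ (Fin n) | if ε i then 0 < y i + a i else y i + a i < 0} := by
    ext y; simp [cone, Set.mem_iInter]
  rw [this]
  refine MeasurableSet.iInter fun i => ?_
  by_cases h : ε i
  · simp only [h, if_true]
    exact measurableSet_lt measurable_const (((continuous_apply i).comp (PiLp.continuous_ofLp 2 _)).measurable.add_const _)
  · simp only [h, if_false]
    exact measurableSet_lt (((continuous_apply i).comp (PiLp.continuous_ofLp 2 _)).measurable.add_const _) measurable_const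
theorem pizza_A1n {n : ℕ} (K : Set (EuclideanSpace ℝ (Fin n)))
    (hKmeas : MeasurableSet K) (hKvol : volume K < ⊤)
    (hKstable : ∀ ε : Fin n → Bool,
      (fun x : EuclideanSpace ℝ (Fin n) =>
        (WithLp.toLp 2 (fun i => if ε i then -x i else x i) : EuclideanSpace ℝ (Fin n))) '' K = K)
    (a : EuclideanSpace ℝ (Fin n))
    (hbox : {x : EuclideanSpace ℝ (Fin n) | ∀ i, |x i| ≤ |a i|} ⊆ K) :
    ∑ ε : Fin n → Bool,
        (-1 : ℝ) ^ (Finset.univ.filter (fun i => ε i = false)).card *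
          (volume (((fun x => x + a) '' K) ∩ orthant ε)).toReal
      = 2 ^ n * ∏ i, a i := by
  -- Step 1: translation invariance
  have hstep1 : ∀ ε : Fin n → Bool,
      volume (((fun x => x + a) '' K) ∩ orthant ε) = volume (K ∩ cone a ε) := by
    intro ε
    have hset : ((fun x => x + a) '' K) ∩ orthant ε
        = (fun x : EuclideanSpace ℝ (Fin n) => x + (-a)) ⁻¹' (K ∩ cone a ε) := by
      ext x
      simp only [Set.mem_inter_iff, Set.mem_image, Set.mem_preimage, orthant, cone,
        Set.mem_setOf_eq]
      constructor
      · rintro ⟨⟨k, hk, rfl⟩, hx⟩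
        have hkk : k + a + -a = k := by abel
        rw [hkk]
        refine ⟨hk, fun i => ?_⟩
        have hx' := hx i
        have harith : (k + a) i = k i + a i := rfl
        rw [harith] at hx'
        exact hx'
      · rintro ⟨hK', hc⟩
        have hkk : x + -a + a = x := by abel
        refine ⟨⟨x + -a, hK', hkk⟩, fun i => ?_⟩
        have hc' := hc i
        have harith : (x + -a) i + a i = x i := by
          show x i + -(a i) + a i = x i; ring
        rw [harith] at hc'
        exact hc'
    rw [hset]
    exact measure_preimage_add_right volume (-a) _
  -- measurability / integrability
  have hKTmeas : ∀ ε : Fin n → Bool, MeasurableSet (K ∩ cone a ε) :=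
    fun ε => hKmeas.inter (cone_meas a ε)
  have hKTfin : ∀ ε : Fin n → Bool, volume (K ∩ cone a ε) < ⊤ :=
    fun ε => lt_of_le_of_lt (measure_mono Set.inter_subset_left) hKvol
  have hind_int : ∀ ε : Fin n → Bool,
      Integrable ((K ∩ cone a ε).indicator (fun _ => (1:ℝ))) volume :=
    fun ε => (integrable_indicator_iff (hKTmeas ε)).2 (integrableOn_const (hKTfin ε).ne)
  -- Step 2: pointwise identity
  have pointwise1 : ∀ y : EuclideanSpace ℝ (Fin n),
      (∑ ε : Fin n → Bool, (-1 : ℝ) ^ (Finset.univ.filter (fun i => ε i = false)).card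
          * (K ∩ cone a ε).indicator (fun _ => (1:ℝ)) y)
        = K.indicator (fun y => ∏ i, Real.sign (y i + a i)) y := by
    intro y
    by_cases hy : y ∈ K
    · have hL : ∀ ε : Fin n → Bool,
          (-1 : ℝ) ^ (Finset.univ.filter (fun i => ε i = false)).card
              * (K ∩ cone a ε).indicator (fun _ => (1:ℝ)) y
            = ∏ i, ((fun (i : Fin n) (b : Bool) =>
                (if b then (1:ℝ) else -1)
                  * (if (if b then 0 < y i + a i else y i + a i < 0) then (1:ℝ) else 0)) i (ε i)) := by
        intro ε
        rw [sign_prod ε]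
        have hind : (K ∩ cone a ε).indicator (fun _ => (1:ℝ)) y
            = ∏ i, (if (if ε i then 0 < y i + a i else y i + a i < 0) then (1:ℝ) else 0) := by
          by_cases hc : y ∈ cone a ε
          · rw [Set.indicator_of_mem (Set.mem_inter hy hc)]
            refine (Finset.prod_eq_one fun i _ => ?_).symm
            rw [if_pos (hc i)]
          · rw [Set.indicator_of_notMem (fun h => hc h.2)]
            have : ∃ i, ¬ (if ε i then 0 < y i + a i else y i + a i < 0) := by
              by_contra h
              push_neg at h
              exact hc fun i => h i
            obtain ⟨i, hi⟩ := this
            refine (Finset.prod_eq_zero (Finset.mem_univ i) ?_).symm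
            exact if_neg hi
        rw [hind, ← Finset.prod_mul_distrib]
      have hsum := sum_prod_bool (fun (i : Fin n) (b : Bool) =>
        (if b then (1:ℝ) else -1)
          * (if (if b then 0 < y i + a i else y i + a i < 0) then (1:ℝ) else 0))
      rw [Finset.sum_congr rfl (fun ε _ => hL ε), hsum, Set.indicator_of_mem hy]
      exact Finset.prod_congr rfl fun i _ => ind_sign (y i + a i)
    · have hz : ∀ ε : Fin n → Bool, (K ∩ cone a ε).indicator (fun _ => (1:ℝ)) y = 0 :=
        fun ε => Set.indicator_of_notMem (fun h => hy h.1) _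
      simp [hz, Set.indicator_of_notMem hy]
  -- Step 3: sum equals integral over K
  have hA : (∑ ε : Fin n → Bool,
        (-1 : ℝ) ^ (Finset.univ.filter (fun i => ε i = false)).card *
          (volume (((fun x => x + a) '' K) ∩ orthant ε)).toReal)
      = ∫ y in K, ∏ i, Real.sign (y i + a i) := by
    calc
      (∑ ε : Fin n → Bool,
          (-1 : ℝ) ^ (Finset.univ.filter (fun i => ε i = false)).card *
            (volume (((fun x => x + a) '' K) ∩ orthant ε)).toReal)
        = ∑ ε : Fin n → Bool,
            ∫ y, (-1 : ℝ) ^ (Finset.univ.filter (fun i => ε i = false)).card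
              * (K ∩ cone a ε).indicator (fun _ => (1:ℝ)) y := by
          refine Finset.sum_congr rfl fun ε _ => ?_
          rw [hstep1 ε, integral_const_mul, integral_indicator (hKTmeas ε), setIntegral_const, measureReal_def,
            smul_eq_mul, mul_one]
      _ = ∫ y, ∑ ε : Fin n → Bool,
            (-1 : ℝ) ^ (Finset.univ.filter (fun i => ε i = false)).card
              * (K ∩ cone a ε).indicator (fun _ => (1:ℝ)) y := by
          rw [integral_finset_sum _ (fun ε _ => (hind_int ε).const_mul _)]
      _ = ∫ y, K.indicator (fun y => ∏ i, Real.sign (y i + a i)) y :=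
          integral_congr_ae (Filter.Eventually.of_forall pointwise1)
      _ = ∫ y in K, ∏ i, Real.sign (y i + a i) := integral_indicator hKmeas
  rw [hA]
  -- Step 4: symmetrization
  have hgmeas : Measurable (fun y : EuclideanSpace ℝ (Fin n) => ∏ i, Real.sign (y i + a i)) :=
    Finset.measurable_prod _ fun i _ =>
      measurable_realSign.comp
        (Measurable.add_const (((continuous_apply i).comp (PiLp.continuous_ofLp 2 _)).measurable :
          Measurable fun y : EuclideanSpace ℝ (Fin n) => y i) (a i))
  have habs : ∀ z : EuclideanSpace ℝ (Fin n), |∏ i, Real.sign (z i + a i)| ≤ 1 := by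
    intro z
    calc |∏ i, Real.sign (z i + a i)| = ∏ i, |Real.sign (z i + a i)| := Finset.abs_prod _ _
      _ ≤ 1 := Finset.prod_le_one (fun i _ => abs_nonneg _) (fun i _ => abs_sign_le_one _)
  have hint2 : ∀ ε : Fin n → Bool,
      IntegrableOn (fun y => ∏ i, Real.sign ((flipMap ε y) i + a i)) K volume := by
    intro ε
    refine Integrable.mono' (g := fun _ => (1:ℝ))
      (integrableOn_const hKvol.ne)
      ((hgmeas.comp (flip_mp ε).measurable).aestronglyMeasurable) ?_
    exact ae_of_all _ fun y => by rw [Real.norm_eq_abs]; exact habs (flipMap ε y)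
  have hflipK : ∀ ε : Fin n → Bool, flipMap ε ⁻¹' K = K := by
    intro ε
    rw [← Set.image_eq_preimage_of_inverse (flip_invol ε) (flip_invol ε)]
    exact hKstable ε
  have hflipInt : ∀ ε : Fin n → Bool,
      ∫ y in K, ∏ i, Real.sign ((flipMap ε y) i + a i)
        = ∫ y in K, ∏ i, Real.sign (y i + a i) := by
    intro ε
    have h := (flip_mp ε).setIntegral_preimage_emb (flipEquiv ε).measurableEmbedding
      (fun y => ∏ i, Real.sign (y i + a i)) K
    rw [hflipK ε] at h
    exact h
  have hcard : (Finset.univ : Finset (Fin n → Bool)).card = 2 ^ n := by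
    rw [Finset.card_univ]
    simp [Fintype.card_fun]
  have h2 : ∫ y in K, ∏ i, Real.sign (y i + a i)
      = (2 ^ n : ℝ)⁻¹ * ∑ ε : Fin n → Bool,
          ∫ y in K, ∏ i, Real.sign ((flipMap ε y) i + a i) := by
    rw [Finset.sum_congr rfl (fun ε _ => hflipInt ε), Finset.sum_const, hcard,
      nsmul_eq_mul, Nat.cast_pow, Nat.cast_ofNat, ← mul_assoc,
      inv_mul_cancel₀ (by positivity : (2:ℝ)^n ≠ 0), one_mul]
  rw [h2, ← integral_finset_sum _ (fun ε _ => hint2 ε)]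
  -- Step 5: pointwise symmetrized identity
  have pointwise2 : ∀ y : EuclideanSpace ℝ (Fin n),
      (∑ ε : Fin n → Bool, ∏ i, Real.sign ((flipMap ε y) i + a i))
        = ∏ i, (Real.sign (y i + a i) + Real.sign (-(y i) + a i)) := by
    intro y
    have hsum := sum_prod_bool (fun (i : Fin n) (b : Bool) =>
      Real.sign ((if b then -(y i) else y i) + a i))
    have hL : ∀ ε : Fin n → Bool,
        (∏ i, Real.sign ((flipMap ε y) i + a i))
          = ∏ i, (fun (i : Fin n) (b : Bool) =>
              Real.sign ((if b then -(y i) else y i) + a i)) i (ε i) :=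
      fun ε => Finset.prod_congr rfl fun i _ => rfl
    rw [Finset.sum_congr rfl (fun ε _ => hL ε), hsum]
    refine Finset.prod_congr rfl fun i _ => ?_
    norm_num [add_comm]
  rw [integral_congr_ae (ae_of_all _ pointwise2)]
  -- Step 6: a.e. identification with the box indicator
  have hN : volume {y : EuclideanSpace ℝ (Fin n) | ∃ i, y i = a i ∨ y i = -a i} = 0 := by
    have hU : {y : EuclideanSpace ℝ (Fin n) | ∃ i, y i = a i ∨ y i = -a i}
        = ⋃ i, ({y : EuclideanSpace ℝ (Fin n) | y i = a i} ∪ {y | y i = -a i}) := by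
      ext y; simp [Set.mem_iUnion]
    rw [hU]
    exact measure_iUnion_null fun i =>
      measure_union_null (coord_null i (a i)) (coord_null i (-a i))
  have h4 : (∫ y in K, ∏ i, (Real.sign (y i + a i) + Real.sign (-(y i) + a i)))
      = ∫ y in K, ((∏ i, (2 * Real.sign (a i)))
          * Set.indicator {x : EuclideanSpace ℝ (Fin n) | ∀ i, |x i| ≤ |a i|}
              (fun _ => (1:ℝ)) y) := by
    refine setIntegral_congr_ae hKmeas ?_
    filter_upwards [measure_eq_zero_iff_ae_notMem.1 hN] with y hyN _
    push_neg at hyN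
    have hcoord : ∀ i, Real.sign (y i + a i) + Real.sign (-(y i) + a i)
        = 2 * Real.sign (a i) * (if |y i| ≤ |a i| then 1 else 0) :=
      fun i => sign_key (a i) (y i) (hyN i).1 (hyN i).2
    rw [Finset.prod_congr rfl (fun i _ => hcoord i), Finset.prod_mul_distrib]
    congr 1
    by_cases hb : y ∈ {x : EuclideanSpace ℝ (Fin n) | ∀ i, |x i| ≤ |a i|}
    · rw [Set.indicator_of_mem hb]
      exact Finset.prod_eq_one fun i _ => if_pos (hb i)
    · rw [Set.indicator_of_notMem hb]
      have : ∃ i, ¬ |y i| ≤ |a i| := by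
        by_contra h
        push_neg at h
        exact hb fun i => h i
      obtain ⟨i, hi⟩ := this
      exact Finset.prod_eq_zero (Finset.mem_univ i) (if_neg hi)
  rw [h4, integral_const_mul, setIntegral_indicator (box_meas a),
    Set.inter_eq_self_of_subset_right hbox, setIntegral_const, measureReal_def, smul_eq_mul, mul_one,
    box_vol a, ← Finset.prod_mul_distrib]
  -- Step 7: final computation
  have hfac : ∀ i, (2 * Real.sign (a i)) * (2 * |a i|) = 4 * a i := by
    intro i
    rcases lt_trichotomy (a i) 0 with h | h | h
    · rw [Real.sign_of_neg h, abs_of_neg h]; ring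
    · rw [h]; simp [Real.sign_zero]
    · rw [Real.sign_of_pos h, abs_of_pos h]; ring
  rw [Finset.prod_congr rfl (fun i _ => hfac i), Finset.prod_mul_distrib,
    Finset.prod_const, Finset.card_univ, Fintype.card_fin]
  have h4n : (4:ℝ) ^ n = 2 ^ n * 2 ^ n := by
    rw [show (4:ℝ) = 2 * 2 by norm_num, mul_pow]
  rw [h4n]
  field_simp
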